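/- arXiv:1210.3075 — 8 statements merged into one kernel-verified Lean document; each statement's English description precedes it below -/
import Mathlib

section
/- If a binary n×k matrix M (n ≥ k) has the assignment property, then every column of M contains at most k−1 zero entries; equivalently, each column contains at least n−k+1 ones. -/
/-- Assignment property of a binary n×k matrix (entries in Bool): for every
choice of k distinct rows there is a system of distinct column indices with
ones at the corresponding positions. -/
def AssignProp {n k : ℕ} (M : Fin n → Fin k → Bool) : Prop :=
  ∀ σ : Fin k → Fin n, Function.Injective σ →
    ∃ π : Equiv.Perm (Fin k), ∀ t : Fin k, M (σ t) (π t) = true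
theorem assign_column_zeros {n k : ℕ} (hnk : k ≤ n) (M : Fin n → Fin k → Bool)
    (hM : AssignProp M) (j : Fin k) :
    (Finset.univ.filter (fun i : Fin n => M i j = false)).card ≤ k - 1 ∧
      n - k + 1 ≤ (Finset.univ.filter (fun i : Fin n => M i j = true)).card := by
  classical
  set Z := Finset.univ.filter (fun i : Fin n => M i j = false) with hZ
  have hk : 0 < k := j.pos
  have hzero : Z.card ≤ k - 1 := by
    by_contra h
    push_neg at h
    have hcard : k ≤ Z.card := by omega
    obtain ⟨S, hSZ, hScard⟩ := Finset.exists_subset_card_eq hcard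
    have e := S.orderIsoOfFin hScard
    set σ : Fin k → Fin n := fun t => (e t : Fin n) with hσ
    have hinj : Function.Injective σ := by
      intro a b hab
      have : (e a : S) = (e b : S) := Subtype.ext hab
      exact e.injective this
    obtain ⟨π, hπ⟩ := hM σ hinj
    have ht := hπ (π.symm j)
    rw [Equiv.apply_symm_apply] at ht
    have hmem : σ (π.symm j) ∈ Z := hSZ (e (π.symm j)).2
    rw [hZ, Finset.mem_filter] at hmem
    rw [ht] at hmem
    simp at hmem
  refine ⟨hzero, ?_⟩
  have hcompl : (Finset.univ.filter (fun i : Fin n => M i j = true)).card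
      = n - Z.card := by
    have h1 : (Finset.univ.filter (fun i : Fin n => M i j = true))
        = Zᶜ := by
      ext i
      simp [hZ]
    rw [h1, Finset.card_compl, Fintype.card_fin]
  rw [hcompl]
  omega
end

section
/- If a binary n×k matrix M (n ≥ k) has the assignment property, then the total number N of entries equal to 1 in M satisfies N ≥ k(n−k+1). -/
theorem assign_total_ones {n k : ℕ} (hnk : k ≤ n) (M : Fin n → Fin k → Bool)
    (hM : AssignProp M) :
    k * (n - k + 1) ≤
      (Finset.univ.filter (fun p : Fin n × Fin k => M p.1 p.2 = true)).card := by
  have key : ∀ j : Fin k, n - k + 1 ≤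
      (Finset.univ.filter (fun i : Fin n => M i j = true)).card := by
    intro j
    by_contra h
    push_neg at h
    have hsplit : (Finset.univ.filter (fun i : Fin n => M i j = true)).card
        + (Finset.univ.filter (fun i : Fin n => ¬ (M i j = true))).card = n := by
      rw [Finset.card_filter_add_card_filter_not]
      simp
    have hk : k ≤ (Finset.univ.filter (fun i : Fin n => ¬ (M i j = true))).card := by
      omega
    obtain ⟨T, hTsub, hTcard⟩ := Finset.exists_subset_card_eq hk
    set σ := T.orderEmbOfFin hTcard with hσ
    obtain ⟨π, hπ⟩ := hM σ σ.injective
    have ht := hπ (π.symm j)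
    rw [Equiv.apply_symm_apply] at ht
    have hmem : σ (π.symm j) ∈ T := T.orderEmbOfFin_mem hTcard _
    have := hTsub hmem
    rw [Finset.mem_filter] at this
    exact this.2 ht
  have hsum : (Finset.univ.filter (fun p : Fin n × Fin k => M p.1 p.2 = true)).card
      = ∑ j : Fin k, (Finset.univ.filter (fun i : Fin n => M i j = true)).card := by
    rw [Finset.card_filter, Fintype.sum_prod_type, Finset.sum_comm]
    simp only [Finset.card_filter]
  rw [hsum]
  calc k * (n - k + 1) = ∑ _j : Fin k, (n - k + 1) := by
        simp [Finset.sum_const, mul_comm]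
    _ ≤ ∑ j : Fin k, (Finset.univ.filter (fun i : Fin n => M i j = true)).card :=
        Finset.sum_le_sum (fun j _ => key j)
end

section
/- If a binary n×k matrix M (n ≥ k) has the assignment property, and l_max denotes the maximal number of ones in any row of M, then n · l_max ≥ k(n−k+1). -/
theorem assign_lmax {n k : ℕ} (hnk : k ≤ n) (M : Fin n → Fin k → Bool)
    (hM : AssignProp M) :
    k * (n - k + 1) ≤
      n * (Finset.univ.sup
        (fun i : Fin n => (Finset.univ.filter (fun j : Fin k => M i j = true)).card)) := by
  rcases Nat.eq_zero_or_pos k with hk | hk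
  · simp [hk]
  have hcol : ∀ j : Fin k,
      n - k + 1 ≤ (Finset.univ.filter (fun i : Fin n => M i j = true)).card := by
    intro j
    by_contra h
    push_neg at h
    set Z := Finset.univ.filter (fun i : Fin n => M i j = false) with hZ
    have hsum : (Finset.univ.filter (fun i : Fin n => M i j = true)).card + Z.card = n := by
      have := Finset.card_filter_add_card_filter_not
        (s := (Finset.univ : Finset (Fin n))) (p := fun i => M i j = true)
      simpa [hZ] using this
    have hZk : k ≤ Z.card := by omega
    obtain ⟨π, hπ⟩ := hM (Z.orderEmbOfCardLe hZk) (Z.orderEmbOfCardLe hZk).injective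
    have hmem := Z.orderEmbOfCardLe_mem hZk (π.symm j)
    have htrue := hπ (π.symm j)
    rw [Equiv.apply_symm_apply] at htrue
    simp only [hZ, Finset.mem_filter] at hmem
    rw [htrue] at hmem
    simp at hmem
  have hdc : ∑ j : Fin k, (Finset.univ.filter (fun i : Fin n => M i j = true)).card
           = ∑ i : Fin n, (Finset.univ.filter (fun j : Fin k => M i j = true)).card := by
    simp_rw [Finset.card_filter]
    exact Finset.sum_comm
  calc k * (n - k + 1) = ∑ _j : Fin k, (n - k + 1) := by simp [mul_comm]
    _ ≤ ∑ j : Fin k, (Finset.univ.filter (fun i : Fin n => M i j = true)).card :=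
        Finset.sum_le_sum (fun j _ => hcol j)
    _ = ∑ i : Fin n, (Finset.univ.filter (fun j : Fin k => M i j = true)).card := hdc
    _ ≤ ∑ _i : Fin n, (Finset.univ.sup
        (fun i : Fin n => (Finset.univ.filter (fun j : Fin k => M i j = true)).card)) :=
        Finset.sum_le_sum (fun i _ => Finset.le_sup (f := fun i : Fin n => (Finset.univ.filter (fun j : Fin k => M i j = true)).card) (Finset.mem_univ i))
    _ = _ := by simp [mul_comm]
end

section
/- Let k ≥ 3 be odd, l = (k+1)/2, n = 2k, and let M be the l-banded matrix: its rows are indexed by i ∈ {0,…,2k−1}, and M_{i,j} = 1 if and only if (j − i) mod k < l. Then M has the assignment property. -/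
/-- The l-banded 2k×k matrix: entry (i,j) is 1 iff (j - i) mod k < l. -/
def banded (k l : ℕ) (i : Fin (2*k)) (j : Fin k) : Bool :=
  decide ((((j : ℕ) : ℤ) - ((i : ℕ) : ℤ)) % (k : ℤ) < (l : ℤ))

section Aux
variable {k : ℕ} [NeZero k]

lemma cast_val_eq (a : ZMod k) : ((a.val : ℕ) : ZMod k) = a := by
  rw [ZMod.natCast_val, ZMod.cast_id]

lemma val_intCast_small (v : ℤ) (h0 : 0 ≤ v) (h1 : v < (k:ℤ)) :
    (((v : ZMod k)).val : ℤ) = v := by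
  rw [ZMod.val_intCast]
  exact Int.emod_eq_of_lt h0 h1

lemma val_intCast_small_neg (v : ℤ) (h0 : -(k:ℤ) ≤ v) (h1 : v < 0) :
    (((v : ZMod k)).val : ℤ) = v + k := by
  rw [ZMod.val_intCast]
  have h2 : v % (k:ℤ) = (v + (k:ℤ) * 1) % k := (Int.add_mul_emod_self_left v (k:ℤ) 1).symm
  rw [h2, mul_one]
  exact Int.emod_eq_of_lt (by omega) (by omega)

lemma banded_iff_val (l : ℕ) (i : Fin (2*k)) (j : Fin k) :
    banded k l i j = true ↔ (((j:ℕ) : ZMod k) - ((i:ℕ) : ZMod k)).val < l := by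
  have hcast : (((j:ℕ) : ZMod k) - ((i:ℕ) : ZMod k))
      = (((((j:ℕ):ℤ) - ((i:ℕ):ℤ)) : ℤ) : ZMod k) := by push_cast; ring
  rw [banded, decide_eq_true_eq, hcast, ← Nat.cast_lt (α := ℤ), ZMod.val_intCast]

end Aux

lemma hall_cond {c k : ℕ} (hc : 1 ≤ c) (hkc : k = 2*c+1)
    (σ : Fin k → Fin (2*k)) (hσ : Function.Injective σ) (s : Finset (Fin k)) :
    s.card ≤ (s.biUnion (fun i =>
      Finset.univ.filter (fun j => banded k (c+1) (σ i) j = true))).card := by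
  haveI : NeZero k := ⟨by omega⟩
  rcases s.eq_empty_or_nonempty with rfl | hs
  · simp
  classical
  set ρ : Fin k → ZMod k := fun i => ((σ i : ℕ) : ZMod k) with hρ
  set R : Finset (ZMod k) := s.image ρ with hR
  -- Step A: each residue class has at most 2 rows
  have hfiber : ∀ b ∈ R, (s.filter (fun i => ρ i = b)).card ≤ 2 := by
    intro b hb
    have hbval : b.val < k := ZMod.val_lt b
    have hb2 : b.val + k < 2*k := by omega
    have hmap : ∀ i ∈ s.filter (fun i => ρ i = b),
        σ i ∈ ({⟨b.val, by omega⟩, ⟨b.val + k, hb2⟩} : Finset (Fin (2*k))) := by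
      intro i hi
      rw [Finset.mem_filter] at hi
      have h1 : ((σ i : ℕ) : ZMod k).val = b.val := congrArg ZMod.val hi.2
      rw [ZMod.val_natCast] at h1
      have h2 : (σ i : ℕ) < 2*k := (σ i).isLt
      have h5 : (σ i : ℕ) = b.val ∨ (σ i : ℕ) = b.val + k := by
        rcases Nat.lt_or_ge (σ i : ℕ) k with hlt | hge
        · left; rw [Nat.mod_eq_of_lt hlt] at h1; omega
        · right
          rw [Nat.mod_eq_sub_mod hge, Nat.mod_eq_of_lt (by omega)] at h1
          omega
      simp only [Finset.mem_insert, Finset.mem_singleton]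
      rcases h5 with h5 | h5
      · left; apply Fin.ext; simpa using h5
      · right; apply Fin.ext; simpa using h5
    calc (s.filter (fun i => ρ i = b)).card
        ≤ ({⟨b.val, by omega⟩, ⟨b.val + k, hb2⟩} : Finset (Fin (2*k))).card :=
          Finset.card_le_card_of_injOn σ hmap (fun a _ b2 _ h => hσ h)
      _ ≤ 2 := le_trans (Finset.card_insert_le _ _) (by simp)
  have hcard2 : s.card ≤ 2 * R.card := Finset.card_le_mul_card_image s 2 hfiber
  set A := s.biUnion (fun i =>
      Finset.univ.filter (fun j => banded k (c+1) (σ i) j = true)) with hA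
  have hmemA : ∀ j : Fin k, j ∈ A ↔ ∃ r ∈ R, (((j:ℕ) : ZMod k) - r).val < c + 1 := by
    intro j
    simp only [hA, Finset.mem_biUnion, Finset.mem_filter, Finset.mem_univ, true_and,
      hR, Finset.mem_image]
    constructor
    · rintro ⟨i, hi, hb⟩
      exact ⟨ρ i, ⟨i, hi, rfl⟩, (banded_iff_val _ _ _).mp hb⟩
    · rintro ⟨r, ⟨i, hi, rfl⟩, hlt⟩
      exact ⟨i, hi, (banded_iff_val _ _ _).mpr hlt⟩
  by_cases hUe : ∀ j : Fin k, j ∈ A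
  · have hAu : A = Finset.univ := Finset.eq_univ_iff_forall.mpr hUe
    rw [hAu]
    simpa using Finset.card_le_univ s
  push_neg at hUe
  obtain ⟨u, hu⟩ := hUe
  have hstar : ∀ x : Fin k, x ∉ A → ∀ r ∈ R,
      1 ≤ (r - ((x:ℕ) : ZMod k)).val ∧ (r - ((x:ℕ) : ZMod k)).val ≤ c := by
    intro x hx r hr
    have hnot : ¬ (((x:ℕ) : ZMod k) - r).val < c + 1 := by
      intro h; exact hx ((hmemA x).mpr ⟨r, hr, h⟩)
    push_neg at hnot
    have hne : ((x:ℕ) : ZMod k) - r ≠ 0 := by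
      intro h; rw [h] at hnot; simp [ZMod.val_zero] at hnot
    have hneg : (r - ((x:ℕ) : ZMod k)) = -(((x:ℕ) : ZMod k) - r) := by ring
    rw [hneg, ZMod.neg_val, if_neg hne]
    have hv : (((x:ℕ) : ZMod k) - r).val < k := ZMod.val_lt _
    omega
  set u' : ZMod k := ((u:ℕ) : ZMod k) with hu'
  set B : Finset ℕ := R.image (fun r => (r - u').val) with hB
  have hRne : R.Nonempty := hs.image ρ
  have hBne : B.Nonempty := hRne.image _
  set b := B.min' hBne with hbdef
  set bm := B.max' hBne with hbmdef
  have hbB := B.min'_mem hBne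
  have hbmB := B.max'_mem hBne
  obtain ⟨r0, hr0R, hr0⟩ := Finset.mem_image.mp hbB
  obtain ⟨r1, hr1R, hr1⟩ := Finset.mem_image.mp hbmB
  rw [← hbdef] at hr0
  rw [← hbmdef] at hr1
  have hbounds : ∀ w ∈ B, 1 ≤ w ∧ w ≤ c := by
    intro w hw
    obtain ⟨r, hrR, rfl⟩ := Finset.mem_image.mp hw
    exact hstar u hu r hrR
  have hb1 : 1 ≤ b := (hbounds b hbB).1
  have hbmc : bm ≤ c := (hbounds bm hbmB).2
  have hbbm : b ≤ bm := B.min'_le _ hbmB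
  have hRB : R.card = B.card := by
    rw [hB]
    refine (Finset.card_image_of_injOn ?_).symm
    intro a _ a2 _ h
    have h2 := congrArg (fun n : ℕ => ((n : ℕ) : ZMod k)) h
    simp only [cast_val_eq] at h2
    exact sub_left_injective h2
  have hmIcc : B ⊆ Finset.Icc b bm :=
    fun w hw => Finset.mem_Icc.mpr ⟨B.min'_le w hw, B.le_max' w hw⟩
  have hm_le : B.card ≤ bm + 1 - b := by
    have hcc := Finset.card_le_card hmIcc
    rwa [Nat.card_Icc] at hcc
  have hr1eq : r1 = u' + ((bm : ℕ) : ZMod k) := by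
    have h1 : ((bm:ℕ) : ZMod k) = r1 - u' := by rw [← hr1, cast_val_eq]
    rw [h1]; ring
  have hr0eq : r0 = u' + ((b : ℕ) : ZMod k) := by
    have h1 : ((b:ℕ) : ZMod k) = r0 - u' := by rw [← hr0, cast_val_eq]
    rw [h1]; ring
  set U : Finset (Fin k) := Aᶜ with hUdef
  have huU : u ∈ U := Finset.mem_compl.mpr hu
  have hmap2 : ∀ x ∈ U,
      ((((x:ℕ) : ZMod k) - r1 + ((c:ℕ) : ZMod k)).val) < c + b - bm := by
    intro x hxU
    have hxA : x ∉ A := Finset.mem_compl.mp hxU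
    obtain ⟨hw1, hw2⟩ := hstar x hxA r1 hr1R
    obtain ⟨hv1, hv2⟩ := hstar x hxA r0 hr0R
    set ξ := ((x:ℕ) : ZMod k) with hξ
    set w := (r1 - ξ).val with hw
    have h1 : r1 - ξ = ((w : ℕ) : ZMod k) := (cast_val_eq _).symm
    have e1 : ξ - r1 + ((c:ℕ) : ZMod k) = ((((c:ℤ) - (w:ℤ)) : ℤ) : ZMod k) := by
      have h2 : ξ - r1 = -((w:ℕ) : ZMod k) := by rw [← h1]; ring
      rw [h2]; push_cast; ring
    have e1val : ((ξ - r1 + ((c:ℕ):ZMod k)).val : ℤ) = (c:ℤ) - w := by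
      rw [e1]; exact val_intCast_small _ (by omega) (by push_cast; omega)
    have e2 : r0 - ξ = ((((b:ℤ) - (bm:ℤ) + (w:ℤ)) : ℤ) : ZMod k) := by
      have h3 : r0 - ξ = (r0 - r1) + (r1 - ξ) := by ring
      rw [h3, h1, hr0eq, hr1eq]
      push_cast; ring
    have hkey : (1:ℤ) ≤ (b:ℤ) - bm + w := by
      by_contra hcon
      push_neg at hcon
      have hle0 : (b:ℤ) - bm + w ≤ 0 := by omega
      rcases eq_or_lt_of_le hle0 with heq | hlt
      · have h0 : (r0 - ξ).val = 0 := by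
          have : r0 - ξ = ((0:ℤ) : ZMod k) := by rw [e2, heq]
          rw [this]; simp
        omega
      · have hvalv : ((r0 - ξ).val : ℤ) = ((b:ℤ) - bm + w) + k := by
          rw [e2]; exact val_intCast_small_neg _ (by omega) hlt
        omega
    omega
  have hUcard : U.card ≤ c + b - bm := by
    have hinj : Set.InjOn (fun x : Fin k =>
        (((x:ℕ):ZMod k) - r1 + ((c:ℕ):ZMod k)).val) U := by
      intro x hx y hy hxy
      have h1 : (((x:ℕ):ZMod k) - r1 + ((c:ℕ):ZMod k))
          = (((y:ℕ):ZMod k) - r1 + ((c:ℕ):ZMod k)) := by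
        have h2 := congrArg (fun n : ℕ => ((n : ℕ) : ZMod k)) hxy
        simpa only [cast_val_eq] using h2
      have h3 : ((x:ℕ) : ZMod k) = ((y:ℕ) : ZMod k) := by
        have := h1; linear_combination this
      have h4 := congrArg ZMod.val h3
      rw [ZMod.val_cast_of_lt x.isLt, ZMod.val_cast_of_lt y.isLt] at h4
      exact Fin.ext h4
    calc U.card ≤ (Finset.range (c + b - bm)).card :=
          Finset.card_le_card_of_injOn _
            (fun x hx => Finset.mem_range.mpr (hmap2 x hx)) hinj
      _ = c + b - bm := Finset.card_range _
  have hcompl : A.card + U.card = k := by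
    rw [hUdef]
    simpa [Fintype.card_fin] using Finset.card_add_card_compl A
  have hu1 : 1 ≤ U.card := Finset.card_pos.mpr ⟨u, huU⟩
  omega


theorem banded_assign {k : ℕ} (hk : 3 ≤ k) (hodd : Odd k) :
    AssignProp (banded k ((k + 1) / 2)) := by
  obtain ⟨c, hc⟩ := hodd
  have hl : (k + 1) / 2 = c + 1 := by omega
  intro σ hσ
  classical
  have hall := (Finset.all_card_le_biUnion_card_iff_exists_injective
      (fun i : Fin k => Finset.univ.filter
        (fun j => banded k ((k + 1) / 2) (σ i) j = true))).mp ?_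
  · obtain ⟨f, hfinj, hf⟩ := hall
    refine ⟨Equiv.ofBijective f (Finite.injective_iff_bijective.mp hfinj), fun t => ?_⟩
    have ht := hf t
    simp only [Finset.mem_filter] at ht
    exact ht.2
  · intro s
    rw [hl]
    exact hall_cond (by omega) (by omega) σ hσ s
end

section
/- Let k ≥ 3 be odd, l = (k+1)/2, and let M be the 2k×k l-banded matrix defined by M_{i,j} = 1 iff (j − i) mod k < l. For any m ≤ k distinct rows of M, if the submatrix A formed by these rows has some null columns (columns with all entries 0), then the set of null columns of A is an interval of consecutive columns in the cyclic order on {0,…,k−1}. -/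
/-- Decompose `e % k` for `e < 4*k`. -/
lemma nmc {k : ℕ} (hk : 0 < k) (e : ℕ) (he : e < 4*k) :
    e % k = e ∨ e % k + k = e ∨ e % k + 2*k = e ∨ e % k + 3*k = e := by
  rcases Nat.lt_or_ge e k with h|h
  · exact Or.inl (Nat.mod_eq_of_lt h)
  rcases Nat.lt_or_ge e (2*k) with h2|h2
  · refine Or.inr (Or.inl ?_)
    rw [Nat.mod_eq_sub_mod h, Nat.mod_eq_of_lt (by omega)]; omega
  rcases Nat.lt_or_ge e (3*k) with h3|h3
  · refine Or.inr (Or.inr (Or.inl ?_))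
    rw [Nat.mod_eq_sub_mod h, Nat.mod_eq_sub_mod (by omega), Nat.mod_eq_of_lt (by omega)]; omega
  · refine Or.inr (Or.inr (Or.inr ?_))
    rw [Nat.mod_eq_sub_mod h, Nat.mod_eq_sub_mod (by omega), Nat.mod_eq_sub_mod (by omega),
      Nat.mod_eq_of_lt (by omega)]; omega

lemma mod_eq_of {k a b : ℕ}
    (h : a = b ∨ a + k = b ∨ a = b + k ∨ a + 2*k = b ∨ a = b + 2*k) :
    a % k = b % k := by
  rcases h with h|h|h|h|h
  · rw [h]
  · rw [← h, Nat.add_mod_right]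
  · rw [h, Nat.add_mod_right]
  · rw [← h, show a + 2*k = a + k + k by ring, Nat.add_mod_right, Nat.add_mod_right]
  · rw [h, show b + 2*k = b + k + k by ring, Nat.add_mod_right, Nat.add_mod_right]

lemma banded_false_iff {k l : ℕ} (hk : 0 < k) (i : Fin (2*k)) (j : Fin k) :
    banded k l i j = false ↔ l ≤ ((j : ℕ) + 2*k - (i : ℕ)) % k := by
  have hik : (i : ℕ) < 2*k := i.isLt
  have key : (((j:ℕ) : ℤ) - ((i:ℕ) : ℤ)) % (k:ℤ)
      = ((((j : ℕ) + 2*k - (i : ℕ)) % k : ℕ) : ℤ) := by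
    rw [Int.natCast_mod]
    have h2 : (((j:ℕ) + 2*k - (i:ℕ) : ℕ) : ℤ) = ((j:ℕ):ℤ) - ((i:ℕ):ℤ) + (k:ℤ)*2 := by
      rw [Nat.cast_sub (by omega)]; push_cast; ring
    rw [h2, Int.add_mul_emod_self_left]
  unfold banded
  rw [decide_eq_false_iff_not, not_lt, key]
  exact_mod_cast Iff.rfl

lemma conv_key {k m : ℕ} (hm : k = 2*m+1) {i j1 j2 t : ℕ}
    (hi : i < 2*k) (hj1 : j1 < k) (hj2 : j2 < k)
    (h1 : m+1 ≤ (j1 + 2*k - i) % k) (h2 : m+1 ≤ (j2 + 2*k - i) % k)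
    (hd : (j2 + k - j1) % k ≤ m) (ht : t ≤ (j2 + k - j1) % k) :
    m+1 ≤ ((j1 + t) % k + 2*k - i) % k := by
  have hk : 0 < k := by omega
  set x := (j1 + 2*k - i) % k with hx
  set d := (j2 + k - j1) % k with hdd
  have hxk : x < k := Nat.mod_lt _ hk
  have hdk : d < k := Nat.mod_lt _ hk
  have hA : (x + d) % k = (j2 + 2*k - i) % k := by
    rw [hx, hdd, ← Nat.add_mod, show (j1+2*k-i)+(j2+k-j1) = (j2+2*k-i) + k from by omega,
      Nat.add_mod_right]
  have hxd : x + d < k := by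
    by_contra hc
    push_neg at hc
    have h5 : (x + d) % k = x + d - k := by
      rw [Nat.mod_eq_sub_mod hc, Nat.mod_eq_of_lt (by omega)]
    rw [← hA] at h2
    omega
  have hgoal : ((j1 + t) % k + 2*k - i) % k = x + t := by
    have e1 : (j1 + t) % k + 2*k - i = (j1 + t) % k + (2*k - i) := by omega
    rw [e1, Nat.mod_add_mod, show j1 + t + (2*k - i) = (j1 + 2*k - i) + t from by omega,
      Nat.add_mod (j1+2*k-i) t, ← hx, Nat.mod_eq_of_lt (show t < k by omega),
      Nat.mod_eq_of_lt (show x + t < k by omega)]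
  rw [hgoal]
  omega

def NullS (k m : ℕ) (I : Finset (Fin (2*k))) (a : ℕ) : Prop :=
  ∀ i ∈ I, m+1 ≤ (a % k + 2*k - (i : ℕ)) % k

lemma nullS_per {k m : ℕ} {I : Finset (Fin (2*k))} {a b : ℕ} (h : a % k = b % k) :
    NullS k m I a ↔ NullS k m I b := by unfold NullS; rw [h]

lemma nullS_mem {k m : ℕ} (hm : k = 2*m+1) (I : Finset (Fin (2*k))) (j : Fin k) :
    (∀ i ∈ I, banded k ((k+1)/2) i j = false) ↔ NullS k m I (j : ℕ) := by
  unfold NullS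
  rw [Nat.mod_eq_of_lt j.isLt]
  constructor <;> intro h i hi <;> have h3 := h i hi
  · rwa [banded_false_iff (by omega), show (k+1)/2 = m+1 from by omega] at h3
  · rw [banded_false_iff (by omega), show (k+1)/2 = m+1 from by omega]; exact h3

lemma nullS_conv {k m : ℕ} (hm : k = 2*m+1) {I : Finset (Fin (2*k))} {j1 j2 t : ℕ}
    (hj1 : j1 < k) (hj2 : j2 < k) (h1 : NullS k m I j1) (h2 : NullS k m I j2)
    (hd : (j2 + k - j1) % k ≤ m) (ht : t ≤ (j2 + k - j1) % k) :
    NullS k m I (j1 + t) := by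
  intro i hi
  have h1' := h1 i hi
  have h2' := h2 i hi
  rw [Nat.mod_eq_of_lt hj1] at h1'
  rw [Nat.mod_eq_of_lt hj2] at h2'
  exact conv_key hm i.isLt hj1 hj2 h1' h2' hd ht

theorem banded_null_columns_consecutive {k : ℕ} (hk : 3 ≤ k) (hodd : Odd k)
    (I : Finset (Fin (2*k))) (hI : I.card ≤ k)
    (hne : (Finset.univ.filter
      (fun j : Fin k => ∀ i ∈ I, banded k ((k + 1) / 2) i j = false)).Nonempty) :
    ∃ c r : ℕ,
      Finset.univ.filter
        (fun j : Fin k => ∀ i ∈ I, banded k ((k + 1) / 2) i j = false) =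
      Finset.univ.filter (fun j : Fin k => ∃ t < r, (j : ℕ) = (c + t) % k) := by
  classical
  obtain ⟨m, hm⟩ : ∃ m, k = 2*m+1 := ⟨k/2, by obtain ⟨c, hc⟩ := hodd; omega⟩
  have hk0 : 0 < k := by omega
  by_cases hIe : I = ∅
  · subst hIe
    refine ⟨0, k, ?_⟩
    ext j
    simp only [Finset.mem_filter, Finset.mem_univ, true_and, Finset.notMem_empty,
      false_implies, implies_true, true_iff]
    exact ⟨(j:ℕ), j.isLt, by simp [Nat.mod_eq_of_lt j.isLt]⟩
  · obtain ⟨i0, hi0⟩ := Finset.nonempty_iff_ne_empty.mpr hIe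
    set j0v := (i0 : ℕ) % k with hj0v_def
    have hj0k : j0v < k := Nat.mod_lt _ hk0
    have hj0S : ¬ NullS k m I j0v := by
      intro hS
      have h := hS i0 hi0
      rw [Nat.mod_eq_of_lt hj0k] at h
      have hi0k : (i0:ℕ) < 2*k := i0.isLt
      have c1 := nmc hk0 (i0:ℕ) (by omega)
      have hlt : (j0v + 2*k - (i0:ℕ)) % k < k := Nat.mod_lt _ hk0
      have c2 := nmc hk0 (j0v + 2*k - (i0:ℕ)) (by omega)
      omega
    obtain ⟨je, hje⟩ := hne
    rw [Finset.mem_filter] at hje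
    have hjeS : NullS k m I (je : ℕ) := (nullS_mem hm I je).mp hje.2
    have hjek : (je:ℕ) < k := je.isLt
    set d0 := ((je:ℕ) + k - j0v) % k with hd0_def
    have hd0k : d0 < k := Nat.mod_lt _ hk0
    have hd0pos : 0 < d0 := by
      rcases Nat.eq_zero_or_pos d0 with h0 | h
      · exfalso
        have c1 := nmc hk0 ((je:ℕ) + k - j0v) (by omega)
        have hjj : (je:ℕ) = j0v := by omega
        exact hj0S (hjj ▸ hjeS)
      · exact h
    have hSj0d0 : NullS k m I (j0v + d0) := by
      refine (nullS_per ?_).mpr hjeS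
      apply mod_eq_of
      have c1 := nmc hk0 ((je:ℕ) + k - j0v) (by omega)
      omega
    have hT1ne : ((Finset.range (k+1)).filter
        (fun t => 0 < t ∧ NullS k m I (j0v + t))).Nonempty :=
      ⟨d0, by rw [Finset.mem_filter, Finset.mem_range]; exact ⟨by omega, hd0pos, hSj0d0⟩⟩
    set t1 := Finset.min' _ hT1ne with ht1_def
    have ht1mem := Finset.min'_mem _ hT1ne
    rw [Finset.mem_filter, Finset.mem_range] at ht1mem
    have ht1k : t1 ≤ k := by have := ht1mem.1; omega
    have ht1pos : 0 < t1 := ht1mem.2.1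
    have ht1S : NullS k m I (j0v + t1) := ht1mem.2.2
    set c := (j0v + t1) % k with hc_def
    have hck : c < k := Nat.mod_lt _ hk0
    have hcS : NullS k m I c := by
      refine (nullS_per ?_).mpr ht1S
      rw [Nat.mod_eq_of_lt hck]
    have hprednot : ¬ NullS k m I (j0v + t1 - 1) := by
      rcases Nat.lt_or_ge t1 2 with h1 | h1
      · rw [show j0v + t1 - 1 = j0v from by omega]
        exact hj0S
      · intro hS
        have hmem : t1 - 1 ∈ (Finset.range (k+1)).filter
            (fun t => 0 < t ∧ NullS k m I (j0v + t)) := by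
          rw [Finset.mem_filter, Finset.mem_range]
          exact ⟨by omega, by omega,
            by rwa [show j0v + (t1 - 1) = j0v + t1 - 1 from by omega]⟩
        have := Finset.min'_le _ _ hmem
        omega
    have hpred : ¬ NullS k m I (c + k - 1) := by
      intro hS
      apply hprednot
      refine (nullS_per ?_).mp hS
      apply mod_eq_of
      have c1 := nmc hk0 (j0v + t1) (by omega)
      omega
    have hT2ne : ((Finset.range (k+1)).filter
        (fun s => ∀ t < s, NullS k m I (c + t))).Nonempty :=
      ⟨0, by rw [Finset.mem_filter, Finset.mem_range]
             exact ⟨by omega, fun t ht => absurd ht (by omega)⟩⟩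
    set r := Finset.max' _ hT2ne with hr_def
    have hrmem := Finset.max'_mem _ hT2ne
    rw [Finset.mem_filter, Finset.mem_range] at hrmem
    have hrk : r ≤ k := by have := hrmem.1; omega
    have hall : ∀ t < r, NullS k m I (c + t) := hrmem.2
    have hr1 : 1 ≤ r := by
      have hmem : 1 ∈ (Finset.range (k+1)).filter
          (fun s => ∀ t < s, NullS k m I (c + t)) := by
        rw [Finset.mem_filter, Finset.mem_range]
        refine ⟨by omega, fun t ht => ?_⟩
        have h0 : t = 0 := by omega
        subst h0
        simpa using hcS
      exact Finset.le_max' _ _ hmem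
    refine ⟨c, r, ?_⟩
    ext j
    simp only [Finset.mem_filter, Finset.mem_univ, true_and]
    rw [nullS_mem hm I j]
    constructor
    · intro hj
      set d := ((j:ℕ) + k - c) % k with hd_def
      have hdk : d < k := Nat.mod_lt _ hk0
      by_cases hdr : d < r
      · refine ⟨d, hdr, ?_⟩
        have c1 := nmc hk0 ((j:ℕ) + k - c) (by omega)
        have c2 := nmc hk0 (c + d) (by omega)
        have hlt : (c + d) % k < k := Nat.mod_lt _ hk0
        have hjk : (j:ℕ) < k := j.isLt
        omega
      · exfalso
        push_neg at hdr
        by_cases hdm : d ≤ m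
        · have hseg : ∀ t, t ≤ d → NullS k m I (c + t) := fun t ht =>
            nullS_conv hm hck j.isLt hcS hj hdm ht
          have hmem : d + 1 ∈ (Finset.range (k+1)).filter
              (fun s => ∀ t < s, NullS k m I (c + t)) := by
            rw [Finset.mem_filter, Finset.mem_range]
            exact ⟨by omega, fun t ht => hseg t (by omega)⟩
          have := Finset.le_max' _ _ hmem
          omega
        · push_neg at hdm
          have hjk : (j:ℕ) < k := j.isLt
          have hd' : (c + k - (j:ℕ)) % k = k - d := by
            have c1 := nmc hk0 ((j:ℕ) + k - c) (by omega)
            have c2 := nmc hk0 (c + k - (j:ℕ)) (by omega)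
            have h2 : (c + k - (j:ℕ)) % k < k := Nat.mod_lt _ hk0
            omega
          have hseg : ∀ t, t ≤ k - d → NullS k m I ((j:ℕ) + t) := by
            intro t ht
            refine nullS_conv hm j.isLt hck hj hcS ?_ ?_
            · rw [hd']; omega
            · rw [hd']; exact ht
          apply hpred
          have hS := hseg (k - d - 1) (by omega)
          refine (nullS_per ?_).mp hS
          apply mod_eq_of
          have c1 := nmc hk0 ((j:ℕ) + k - c) (by omega)
          omega
    · rintro ⟨t, htr, hjt⟩
      exact (nullS_per (by rw [Nat.mod_eq_of_lt j.isLt]; exact hjt)).mpr (hall t htr)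
end

section
/- Let k ≥ 4 be even, l = k/2, n = 2(k−1), and let M be the augmented l-banded n×k matrix: M = [M' b] where M' is the 2(k−1)×(k−1) l-banded matrix (with M'_{i,j} = 1 iff (j − i) mod (k−1) < l) and b is the column whose first k−1 entries are 0 and last k−1 entries are 1. Then M has the assignment property. -/
/-- The augmented l-banded 2(k-1)×k matrix: the first k-1 columns form the
l-banded matrix modulo k-1, the last column has ones exactly in rows ≥ k-1. -/
def augBanded (k l : ℕ) (i : Fin (2*(k-1))) (j : Fin k) : Bool :=
  if (j : ℕ) < k - 1 then
    decide ((((j : ℕ) : ℤ) - ((i : ℕ) : ℤ)) % ((k : ℤ) - 1) < (l : ℤ))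
  else
    decide (k - 1 ≤ (i : ℕ))

/-- Iterated "shift-and-union": `grow m A = A + {0,1,...,m}` in `ZMod n`. -/
def grow {n : ℕ} : ℕ → Finset (ZMod n) → Finset (ZMod n)
  | 0, A => A
  | m+1, A => grow m A ∪ (grow m A).image (· + 1)

lemma grow_nonempty {n : ℕ} {A : Finset (ZMod n)} (h : A.Nonempty) (m : ℕ) :
    (grow m A).Nonempty := by
  induction m with
  | zero => exact h
  | succ m ih => exact ih.mono (by simp [grow, Finset.subset_union_left])

lemma union_shift_card {n : ℕ} [NeZero n] {A : Finset (ZMod n)} (hA : A.Nonempty)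
    (hlt : A.card < n) : A.card + 1 ≤ (A ∪ A.image (· + 1)).card := by
  by_contra hcon
  push_neg at hcon
  have hsub : A ⊆ A ∪ A.image (· + 1) := Finset.subset_union_left
  have hEq : A = A ∪ A.image (· + 1) :=
    Finset.eq_of_subset_of_card_le hsub (by omega)
  have hinj : Function.Injective (fun x : ZMod n => x + 1) := add_left_injective 1
  have himsub : A.image (· + 1) ⊆ A := by
    intro x hx; rw [hEq]; exact Finset.mem_union_right _ hx
  have him : A.image (· + 1) = A :=
    Finset.eq_of_subset_of_card_le himsub (by rw [Finset.card_image_of_injective _ hinj])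
  obtain ⟨a, ha⟩ := hA
  have key : ∀ m : ℕ, a + (m : ZMod n) ∈ A := by
    intro m
    induction m with
    | zero => simp only [Nat.cast_zero, add_zero]; exact ha
    | succ m ih =>
      have : a + ((m + 1 : ℕ) : ZMod n) = (a + (m : ZMod n)) + 1 := by push_cast; ring
      rw [this, ← him]
      exact Finset.mem_image_of_mem _ ih
  have huniv : A = Finset.univ := by
    apply Finset.eq_univ_iff_forall.mpr
    intro b
    have h1 := key (b - a).val
    have h2 : (((b - a).val : ℕ) : ZMod n) = b - a := by
      rw [ZMod.natCast_val, ZMod.cast_id]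
    rw [h2] at h1
    have : a + (b - a) = b := by ring
    rwa [this] at h1
  have : A.card = n := by rw [huniv, Finset.card_univ, ZMod.card]
  omega

lemma grow_card {n : ℕ} [NeZero n] {A : Finset (ZMod n)} (hA : A.Nonempty) (m : ℕ) :
    min n (A.card + m) ≤ (grow m A).card := by
  induction m with
  | zero => exact min_le_right n A.card
  | succ m ih =>
    show min n (A.card + (m + 1)) ≤ (grow m A ∪ (grow m A).image (· + 1)).card
    by_cases h : (grow m A).card < n
    · have h2 := union_shift_card (grow_nonempty hA m) h
      omega
    · have h3 : (grow m A).card ≤ (grow m A ∪ (grow m A).image (· + 1)).card :=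
        Finset.card_le_card Finset.subset_union_left
      omega

lemma grow_mem {n : ℕ} [NeZero n] {A : Finset (ZMod n)} (m : ℕ) {j : ZMod n}
    (hj : j ∈ grow m A) : ∃ r ∈ A, (j - r).val ≤ m := by
  induction m generalizing j with
  | zero => exact ⟨j, hj, by simp⟩
  | succ m ih =>
    rcases Finset.mem_union.mp hj with h | h
    · obtain ⟨r, hr, hv⟩ := ih h
      exact ⟨r, hr, by omega⟩
    · obtain ⟨x, hx, rfl⟩ := Finset.mem_image.mp h
      obtain ⟨r, hr, hv⟩ := ih hx
      refine ⟨r, hr, ?_⟩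
      have heq : x + 1 - r = (x - r) + 1 := by ring
      rw [heq]
      have h1 : ((x - r) + 1).val ≤ (x - r).val + (1 : ZMod n).val := ZMod.val_add_le _ _
      have h2 : (1 : ZMod n).val ≤ 1 := by
        have : (1 : ZMod n) = ((1 : ℕ) : ZMod n) := by push_cast; rfl
        rw [this, ZMod.val_natCast]
        exact Nat.mod_le 1 n
      omega

theorem augBanded_assign {k : ℕ} (hk : 4 ≤ k) (heven : Even k) :
    AssignProp (augBanded k (k / 2)) := by
  classical
  intro σ hσ
  haveI : NeZero (k - 1) := ⟨by omega⟩
  set l := k / 2 with hl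
  have hk2 : k = 2 * l := by obtain ⟨m, hm⟩ := heven; omega
  have hl2 : 2 ≤ l := by omega
  -- characterization of matrix entries in the banded part
  have hchar : ∀ (v : Fin (2*(k-1))) (j : Fin k), (j : ℕ) < k - 1 →
      (augBanded k l v j = true ↔
        ((((j : ℕ) : ZMod (k-1)) - (((v : Fin (2*(k-1))) : ℕ) : ZMod (k-1))).val < l)) := by
    intro v j hj
    simp only [augBanded, if_pos hj, decide_eq_true_eq]
    have h1 := ZMod.val_intCast (n := k - 1) (((j : ℕ) : ℤ) - (((v : Fin (2*(k-1))) : ℕ) : ℤ))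
    have hcast : ((((j : ℕ) : ℤ) - (((v : Fin (2*(k-1))) : ℕ) : ℤ) : ℤ) : ZMod (k-1))
        = (((j : ℕ) : ZMod (k-1)) - (((v : Fin (2*(k-1))) : ℕ) : ZMod (k-1))) := by
      push_cast; ring
    rw [hcast] at h1
    have hmod : ((k - 1 : ℕ) : ℤ) = (k : ℤ) - 1 := by
      have : 1 ≤ k := by omega
      push_cast [Nat.cast_sub this]; ring
    rw [hmod] at h1
    rw [← h1]
    exact_mod_cast Iff.rfl
  set t : Fin k → Finset (Fin k) :=
    fun i => Finset.univ.filter (fun j => augBanded k l (σ i) j = true) with ht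
  have hall : ∀ S : Finset (Fin k), S.card ≤ (S.biUnion t).card := by
    intro S
    rcases S.eq_empty_or_nonempty with rfl | hS
    · simp
    set res : Fin k → ZMod (k-1) := fun i => (((σ i : Fin (2*(k-1))) : ℕ) : ZMod (k-1)) with hres
    set R : Finset (ZMod (k-1)) := S.image res with hR
    have hRne : R.Nonempty := hS.image _
    -- each residue has at most 2 chosen rows
    have hcard2 : S.card ≤ 2 * R.card := by
      apply Finset.card_le_mul_card_image
      intro c hc
      have : (Finset.filter (fun a => res a = c) S).card ≤
          ({c.val, c.val + (k-1)} : Finset ℕ).card := by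
        apply Finset.card_le_card_of_injOn (fun i => ((σ i : Fin (2*(k-1))) : ℕ))
        · intro a ha
          rw [Finset.mem_coe, Finset.mem_filter] at ha
          have hv : ((σ a : Fin (2*(k-1))) : ℕ) % (k-1) = c.val := by
            rw [← ha.2]; exact (ZMod.val_natCast _ _).symm
          have h1 : ((σ a : Fin (2*(k-1))) : ℕ) < 2*(k-1) := (σ a).isLt
          have h2 : c.val < k - 1 := ZMod.val_lt c
          simp only [Finset.mem_coe, Finset.mem_insert, Finset.mem_singleton]
          rcases lt_or_ge ((σ a : Fin (2*(k-1))) : ℕ) (k-1) with hlt | hge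
          · left; rw [Nat.mod_eq_of_lt hlt] at hv; omega
          · right
            rw [Nat.mod_eq_sub_mod hge,
              Nat.mod_eq_of_lt (by omega : ((σ a : Fin (2*(k-1))) : ℕ) - (k-1) < k-1)] at hv
            omega
        · intro a _ b _ hab
          exact hσ (Fin.val_injective hab)
      have h3 : ({c.val, c.val + (k-1)} : Finset ℕ).card ≤ 2 := by
        apply le_trans (Finset.card_insert_le _ _); simp
      omega
    set G := grow (l-1) R with hG
    have hGcard : min (k-1) (R.card + (l-1)) ≤ G.card := grow_card hRne _
    -- embed ZMod (k-1) into the first k-1 columns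
    set e : ZMod (k-1) → Fin k := fun z => ⟨z.val, by have := ZMod.val_lt z; omega⟩ with he
    have hembinj : Function.Injective e := by
      intro a b hab
      have hv : a.val = b.val := congrArg Fin.val hab
      have ha : ((a.val : ℕ) : ZMod (k-1)) = a := by rw [ZMod.natCast_val, ZMod.cast_id]
      have hb : ((b.val : ℕ) : ZMod (k-1)) = b := by rw [ZMod.natCast_val, ZMod.cast_id]
      rw [← ha, ← hb, hv]
    have hsubset : G.image e ⊆ S.biUnion t := by
      intro j hj
      obtain ⟨z, hz, rfl⟩ := Finset.mem_image.mp hj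
      obtain ⟨r, hr, hval⟩ := grow_mem _ hz
      obtain ⟨i, hiS, hir⟩ := Finset.mem_image.mp hr
      refine Finset.mem_biUnion.mpr ⟨i, hiS, ?_⟩
      simp only [ht, Finset.mem_filter, Finset.mem_univ, true_and]
      have hjlt : ((e z : Fin k) : ℕ) < k - 1 := ZMod.val_lt z
      rw [hchar (σ i) (e z) hjlt]
      have h1 : (((e z : Fin k) : ℕ) : ZMod (k-1)) = z := by
        show ((z.val : ℕ) : ZMod (k-1)) = z
        rw [ZMod.natCast_val, ZMod.cast_id]
      have hir' : (((σ i : Fin (2*(k-1))) : ℕ) : ZMod (k-1)) = r := hir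
      rw [h1, hir']
      omega
    have hbig : G.card ≤ (S.biUnion t).card := by
      have h1 := Finset.card_le_card hsubset
      rwa [Finset.card_image_of_injective _ hembinj] at h1
    by_cases hs : S.card ≤ k - 1
    · omega
    · -- S.card = k; find a "high" row so the last column is available too
      have hSk : S.card = k := by
        have := Finset.card_le_univ S
        simp only [Finset.card_univ, Fintype.card_fin] at this
        omega
      have hhigh : ∃ i ∈ S, k - 1 ≤ ((σ i : Fin (2*(k-1))) : ℕ) := by
        by_contra hcon
        push_neg at hcon
        have hle : S.card ≤ (Finset.range (k-1)).card := by
          apply Finset.card_le_card_of_injOn (fun i => ((σ i : Fin (2*(k-1))) : ℕ))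
          · intro a ha; exact Finset.mem_range.mpr (hcon a ha)
          · intro a _ b _ hab; exact hσ (Fin.val_injective hab)
        rw [Finset.card_range] at hle
        omega
      obtain ⟨i0, hi0S, hi0⟩ := hhigh
      set jlast : Fin k := ⟨k - 1, by omega⟩ with hjlast
      have hlastmem : jlast ∈ S.biUnion t := by
        refine Finset.mem_biUnion.mpr ⟨i0, hi0S, ?_⟩
        simp only [ht, Finset.mem_filter, Finset.mem_univ, true_and]
        have : ¬ ((jlast : ℕ) < k - 1) := by simp [hjlast]
        simp only [augBanded, if_neg this, decide_eq_true_eq]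
        exact hi0
      have hlastnot : jlast ∉ G.image e := by
        intro hmem
        obtain ⟨z, _, hz⟩ := Finset.mem_image.mp hmem
        have : z.val = k - 1 := congrArg Fin.val hz
        have := ZMod.val_lt z
        omega
      have hins : insert jlast (G.image e) ⊆ S.biUnion t :=
        Finset.insert_subset hlastmem hsubset
      have hinscard : (insert jlast (G.image e)).card = G.card + 1 := by
        rw [Finset.card_insert_of_notMem hlastnot,
          Finset.card_image_of_injective _ hembinj]
      have hfin : G.card + 1 ≤ (S.biUnion t).card := by
        rw [← hinscard]; exact Finset.card_le_card hins
      omega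
  obtain ⟨f, hfinj, hf⟩ := (Finset.all_card_le_biUnion_card_iff_exists_injective t).mp hall
  refine ⟨Equiv.ofBijective f (Finite.injective_iff_bijective.mp hfinj), ?_⟩
  intro i
  have := hf i
  simp only [ht, Finset.mem_filter] at this
  exact this.2
end

section
/- Let k ≥ 4 be even, l = k/2, and M the augmented l-banded matrix of size 2(k−1)×k. The total number N of ones in M equals (k−1)(k+1) = k²−1, while the lower bound k(n−k+1) with n = 2(k−1) equals k(k−1); consequently N/(k(k−1)) = (k+1)/k → 1 as k → ∞. -/
open Finset in
lemma cast_mod (a b : ℕ) : ((a % b : ℕ) : ℤ) = (a:ℤ) % (b:ℤ) := Int.natCast_emod a b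

lemma mod_shift (i r m : ℕ) (hm : 0 < m) (hr : r < m) :
    ((((i + r) % m : ℕ) : ℤ) - (i:ℤ)) % (m:ℤ) = (r:ℤ) := by
  rw [cast_mod]
  push_cast
  rw [Int.sub_emod, Int.emod_emod_of_dvd _ dvd_rfl, ← Int.sub_emod]
  have h1 : (i:ℤ) + r - i = (r:ℤ) := by ring
  rw [h1, Int.emod_eq_of_lt (by positivity) (by exact_mod_cast hr)]

lemma row_count (m l i : ℕ) (hm : 0 < m) (hl : l ≤ m) :
    ((Finset.range m).filter fun j : ℕ => ((j:ℤ) - (i:ℤ)) % (m:ℤ) < (l:ℤ)).card = l := by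
  have hm' : (0:ℤ) < (m:ℤ) := by exact_mod_cast hm
  have h := Finset.card_nbij' (s := (Finset.range m).filter fun j : ℕ => ((j:ℤ) - (i:ℤ)) % (m:ℤ) < (l:ℤ))
    (t := Finset.range l)
    (fun j => (((j:ℤ) - (i:ℤ)) % (m:ℤ)).toNat)
    (fun r => (i + r) % m)
    (by
      intro j hj
      simp only [Finset.mem_coe, Finset.mem_filter, Finset.mem_range] at hj ⊢
      have hnn : (0:ℤ) ≤ ((j:ℤ) - (i:ℤ)) % (m:ℤ) := Int.emod_nonneg _ (by omega)
      omega)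
    (by
      intro r hr
      simp only [Finset.mem_coe, Finset.mem_filter, Finset.mem_range] at hr ⊢
      refine ⟨Nat.mod_lt _ hm, ?_⟩
      rw [mod_shift i r m hm (lt_of_lt_of_le hr hl)]
      exact_mod_cast hr)
    (by
      intro j hj
      simp only [Finset.mem_coe, Finset.mem_filter, Finset.mem_range] at hj
      have hnn : (0:ℤ) ≤ ((j:ℤ) - (i:ℤ)) % (m:ℤ) := Int.emod_nonneg _ (by omega)
      have key : ((i:ℤ) + ((j:ℤ) - (i:ℤ)) % (m:ℤ)) % m = (j:ℤ) := by
        rw [Int.add_emod, Int.emod_emod_of_dvd _ dvd_rfl, ← Int.add_emod]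
        have h1 : (i:ℤ) + ((j:ℤ) - i) = (j:ℤ) := by ring
        rw [h1, Int.emod_eq_of_lt (by positivity) (by exact_mod_cast hj.1)]
      have h2 : (((i + (((j:ℤ) - (i:ℤ)) % (m:ℤ)).toNat) % m : ℕ) : ℤ) = (j:ℤ) := by
        rw [cast_mod]
        push_cast [Int.toNat_of_nonneg hnn]
        exact key
      exact_mod_cast h2)
    (by
      intro r hr
      simp only [Finset.mem_coe, Finset.mem_range] at hr
      show (((((i + r) % m : ℕ) : ℤ) - (i:ℤ)) % (m:ℤ)).toNat = r
      rw [mod_shift i r m hm (lt_of_lt_of_le hr hl)]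
      exact Int.toNat_natCast r)
  simpa using h

lemma main_count (k : ℕ) (hk : 4 ≤ k) (hke : Even k) :
    (Finset.univ.filter
        (fun p : Fin (2*(k-1)) × Fin k => augBanded k (k / 2) p.1 p.2 = true)).card
      = (k - 1) * (k + 1) := by
  set l := k / 2 with hl
  set m := k - 1 with hmdef
  have hm : 0 < m := by omega
  have hlm : l ≤ m := by omega
  rw [Finset.card_filter, Fintype.sum_prod_type]
  have inner : ∀ i : Fin (2*m), (∑ j : Fin k, if augBanded k l i j = true then 1 else 0)
      = l + (if m ≤ (i:ℕ) then 1 else 0) := by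
    intro i
    simp only [augBanded, apply_ite (· = true), decide_eq_true_eq]
    have := Fin.sum_univ_eq_sum_range (fun j : ℕ =>
      if (if j < k - 1 then ((j:ℤ) - ((i:ℕ):ℤ)) % ((k:ℤ) - 1) < (l:ℤ) else k - 1 ≤ (i:ℕ))
      then 1 else 0) k
    rw [this]
    have hk1 : k = m + 1 := by omega
    rw [hk1, Finset.sum_range_succ]
    simp only [Nat.add_sub_cancel, lt_irrefl, if_false, Nat.cast_add, Nat.cast_one,
      add_sub_cancel_right]
    have hcongr : ∀ j ∈ Finset.range m,
        (if (if j < m then ((j:ℤ) - ((i:ℕ):ℤ)) % ((m:ℤ)) < (l:ℤ) else m ≤ (i:ℕ)) then 1 else 0)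
        = (if ((j:ℤ) - ((i:ℕ):ℤ)) % ((m:ℤ)) < (l:ℤ) then 1 else 0) := by
      intro j hj
      simp only [Finset.mem_range.mp hj, if_true]
    rw [Finset.sum_congr rfl hcongr, ← Finset.card_filter, row_count m l (i:ℕ) hm hlm]
  rw [Finset.sum_congr rfl (fun i _ => inner i), Finset.sum_add_distrib, Finset.sum_const,
    Finset.card_univ, Fintype.card_fin, smul_eq_mul,
    Fin.sum_univ_eq_sum_range (fun i : ℕ => if m ≤ i then 1 else 0) (2*m),
    ← Finset.card_filter]
  have hIco : (Finset.range (2*m)).filter (fun i => m ≤ i) = Finset.Ico m (2*m) := by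
    ext x; simp [Finset.mem_Ico]; omega
  rw [hIco, Nat.card_Ico]
  have h2l : k = 2 * l := by obtain ⟨c, hc⟩ := hke; omega
  calc 2*m*l + (2*m - m) = m*(2*l+1) := by rw [Nat.two_mul m, Nat.add_sub_cancel]; ring
    _ = (k-1)*(k+1) := by rw [hmdef, show k + 1 = 2*l+1 by omega]


theorem augBanded_near_optimal :
    (∀ k : ℕ, 4 ≤ k → Even k →
      (Finset.univ.filter
          (fun p : Fin (2*(k-1)) × Fin k => augBanded k (k / 2) p.1 p.2 = true)).card
        = (k - 1) * (k + 1) ∧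
      (k - 1) * (k + 1) = k ^ 2 - 1 ∧
      k * (2*(k-1) - k + 1) = k * (k - 1)) ∧
    Filter.Tendsto
      (fun k : ℕ => (((k - 1) * (k + 1) : ℕ) : ℝ) / ((k * (k - 1) : ℕ) : ℝ))
      Filter.atTop (nhds 1) := by
  constructor
  · intro k hk hke
    refine ⟨main_count k hk hke, ?_, ?_⟩
    · obtain ⟨j, rfl⟩ : ∃ j, k = j + 1 := ⟨k - 1, by omega⟩
      have h : (j+1)^2 = j*(j+2) + 1 := by ring
      simp only [Nat.add_sub_cancel, h]
    · rw [show 2*(k-1) - k + 1 = k - 1 by omega]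
  · have h1 : Filter.Tendsto (fun k : ℕ => 1 + (1:ℝ)/(k:ℝ)) Filter.atTop (nhds 1) := by
      simpa using tendsto_const_nhds.add (tendsto_one_div_atTop_nhds_zero_nat (𝕜 := ℝ))
    apply h1.congr'
    filter_upwards [Filter.eventually_ge_atTop 2] with k hk
    have hk0 : (k:ℝ) ≠ 0 := by positivity
    have hk1 : (k:ℝ) - 1 ≠ 0 := by
      have : (2:ℝ) ≤ (k:ℝ) := by exact_mod_cast hk
      intro h; nlinarith
    push_cast [Nat.cast_sub (show 1 ≤ k by omega)]
    field_simp
end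

section
/- Let k ≥ 3 be odd, l = (k+1)/2, and M the 2k×k l-banded matrix. For any m ∈ {1,…,k} and any m distinct rows of M, the number of non-null columns of the corresponding m×k submatrix is at least m. -/
lemma banded_nat {k l : ℕ} (hk : 0 < k) (i : Fin (2*k)) (j : Fin k) :
    banded k l i j = true ↔ ((j : ℕ) + 2*k - (i:ℕ)) % k < l := by
  have hi := i.isLt
  unfold banded
  rw [decide_eq_true_iff]
  have h2 : (((j:ℕ) + 2*k - (i:ℕ) : ℕ) : ℤ) = ((j:ℕ):ℤ) - ((i:ℕ):ℤ) + (k:ℤ)*2 := by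
    push_cast [Nat.cast_sub (by omega : (i:ℕ) ≤ (j:ℕ) + 2*k)]
    ring
  have h1 : (((j:ℕ):ℤ) - ((i:ℕ):ℤ)) % (k:ℤ) = ((((j:ℕ) + 2*k - (i:ℕ) : ℕ)) : ℤ) % (k:ℤ) := by
    rw [h2, Int.add_mul_emod_self_left]
  rw [h1]
  exact_mod_cast Iff.rfl

theorem banded_hall_condition {k : ℕ} (hk : 3 ≤ k) (hodd : Odd k)
    (I : Finset (Fin (2*k))) (hI1 : 1 ≤ I.card) (hIk : I.card ≤ k) :
    I.card ≤ (Finset.univ.filter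
      (fun j : Fin k => ∃ i ∈ I, banded k ((k + 1) / 2) i j = true)).card := by
  obtain ⟨t, ht⟩ := hodd
  have hk0 : 0 < k := by omega
  set l := (k + 1) / 2 with hl
  have hlt : l = t + 1 := by omega
  set J := Finset.univ.filter
      (fun j : Fin k => ∃ i ∈ I, banded k l i j = true) with hJ
  show I.card ≤ J.card
  set e : Fin (2*k) → Fin k := fun i => ⟨(i:ℕ) % k, Nat.mod_lt _ hk0⟩ with he
  set S := I.image e with hS
  have hScard : I.card ≤ 2 * S.card := by
    have h1 : I.card = ∑ p ∈ S, (I.filter (fun i => e i = p)).card :=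
      Finset.card_eq_sum_card_fiberwise (fun x hx => Finset.mem_image_of_mem e hx)
    have h2 : ∀ p ∈ S, (I.filter (fun i => e i = p)).card ≤ 2 := by
      intro p hp
      have hpk := p.isLt
      have hsub : I.filter (fun i => e i = p) ⊆
          {⟨(p:ℕ), by omega⟩, ⟨(p:ℕ) + k, by omega⟩} := by
        intro x hx
        simp only [Finset.mem_filter] at hx
        have hxe : (x:ℕ) % k = (p:ℕ) := by
          have h := hx.2
          rw [he] at h
          exact congrArg Fin.val h
        have hxlt := x.isLt
        simp only [Finset.mem_insert, Finset.mem_singleton, Fin.ext_iff]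
        rcases Nat.lt_or_ge (x:ℕ) k with h|h
        · rw [Nat.mod_eq_of_lt h] at hxe; omega
        · rw [Nat.mod_eq_sub_mod h, Nat.mod_eq_of_lt (by omega)] at hxe
          omega
      calc (I.filter (fun i => e i = p)).card ≤ _ := Finset.card_le_card hsub
        _ ≤ 2 := by
          apply le_trans (Finset.card_insert_le _ _)
          simp
    calc I.card = ∑ p ∈ S, (I.filter (fun i => e i = p)).card := h1
      _ ≤ ∑ p ∈ S, 2 := Finset.sum_le_sum h2
      _ = 2 * S.card := by rw [Finset.sum_const, smul_eq_mul, Nat.mul_comm]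
  by_cases hful : ∀ j : Fin k, j ∈ J
  · have hJu : J = Finset.univ := Finset.eq_univ_iff_forall.mpr hful
    rw [hJu, Finset.card_univ, Fintype.card_fin]; exact hIk
  push_neg at hful
  obtain ⟨q, hq⟩ := hful
  have hqk := q.isLt
  set c := k - 1 - (q:ℕ) with hc
  set ψ : Fin k → ℕ := fun p => ((p:ℕ) + c) % k with hψ
  have hψlt : ∀ p, ψ p < k := fun p => Nat.mod_lt _ hk0
  have hψinj : Function.Injective ψ := by
    intro a b hab
    have h1 : (a:ℕ) + c ≡ (b:ℕ) + c [MOD k] := hab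
    have h2 := Nat.ModEq.add_right_cancel' c h1
    exact Fin.ext (h2.eq_of_lt_of_lt a.isLt b.isLt)
  have hbound : ∀ i ∈ I, ψ (e i) + l < k := by
    intro i hi
    have hik := i.isLt
    have hqi : ¬ (((q:ℕ) + 2*k - (i:ℕ)) % k < l) := by
      intro h
      apply hq
      rw [hJ]
      simp only [Finset.mem_filter, Finset.mem_univ, true_and]
      exact ⟨i, hi, (banded_nat hk0 i q).mpr h⟩
    set a := ((q:ℕ) + 2*k - (i:ℕ)) % k with ha
    have halt : a < k := Nat.mod_lt _ hk0
    have hab : a + ψ (e i) ≡ (k - 1) [MOD k] := by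
      have h1 : a ≡ (q:ℕ) + 2*k - (i:ℕ) [MOD k] := Nat.mod_modEq _ k
      have h2 : ψ (e i) ≡ (i:ℕ) + c [MOD k] := by
        have h3 : ((i:ℕ) % k) + c ≡ (i:ℕ) + c [MOD k] :=
          Nat.ModEq.add_right c (Nat.mod_modEq _ k)
        exact (Nat.mod_modEq _ k).trans h3
      have h3 := h1.add h2
      have h4 : (q:ℕ) + 2*k - (i:ℕ) + ((i:ℕ) + c) = (k-1) + 2*k := by omega
      rw [h4] at h3
      have h5 : (k-1) + 2*k ≡ (k-1) + 0 [MOD k] :=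
        Nat.ModEq.add_left (k-1) (Nat.modEq_zero_iff_dvd.mpr ⟨2, by ring⟩)
      simpa using h3.trans h5
    have haψ : a + ψ (e i) = k - 1 := by
      have h6 := hψlt (e i)
      by_cases hlt2 : a + ψ (e i) < k
      · exact hab.eq_of_lt_of_lt hlt2 (by omega)
      · exfalso
        have he1 : a + ψ (e i) - k + k = a + ψ (e i) := by omega
        have h8 : (a + ψ (e i) - k) + k ≡ (k-1) + k [MOD k] := by
          rw [he1]
          have h8b : (k-1) + k ≡ (k-1) + 0 [MOD k] :=
            Nat.ModEq.add_left _ (Nat.modEq_zero_iff_dvd.mpr ⟨1, by ring⟩)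
          exact hab.trans (by simpa using h8b.symm)
        have h9 := Nat.ModEq.add_right_cancel' k h8
        have h10 : a + ψ (e i) - k = k - 1 := h9.eq_of_lt_of_lt (by omega) (by omega)
        omega
    omega
  have hcov : ∀ i ∈ I, ∀ u, u < l → ∃ j ∈ J, ψ j = ψ (e i) + u := by
    intro i hi u hu
    have hul : u < k := by omega
    have hik := i.isLt
    have hb := hbound i hi
    have hrk : ((i:ℕ)+u) % k < k := Nat.mod_lt _ hk0
    refine ⟨⟨((i:ℕ) + u) % k, hrk⟩, ?_, ?_⟩
    · rw [hJ]
      simp only [Finset.mem_filter, Finset.mem_univ, true_and]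
      refine ⟨i, hi, (banded_nat hk0 i _).mpr ?_⟩
      have h1 : (((i:ℕ)+u) % k + 2*k - (i:ℕ)) + (i:ℕ) ≡ u + (i:ℕ) [MOD k] := by
        have e1 : (((i:ℕ)+u) % k + 2*k - (i:ℕ)) + (i:ℕ) = ((i:ℕ)+u) % k + 2*k := by omega
        rw [e1]
        calc ((i:ℕ)+u) % k + 2*k ≡ ((i:ℕ)+u) + 2*k [MOD k] :=
              Nat.ModEq.add_right _ (Nat.mod_modEq _ _)
          _ ≡ ((i:ℕ)+u) + 0 [MOD k] :=
              Nat.ModEq.add_left _ (Nat.modEq_zero_iff_dvd.mpr ⟨2, by ring⟩)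
          _ = u + (i:ℕ) := by ring
      have h2 := Nat.ModEq.add_right_cancel' _ h1
      have h3 : (((i:ℕ)+u) % k + 2*k - (i:ℕ)) % k = u % k := h2
      show (((i:ℕ)+u) % k + 2*k - (i:ℕ)) % k < l
      rw [h3, Nat.mod_eq_of_lt hul]
      exact hu
    · have hlhs : ψ ⟨((i:ℕ)+u) % k, hrk⟩ ≡ (i:ℕ) + u + c [MOD k] := by
        show ((((i:ℕ)+u) % k) + c) % k ≡ (i:ℕ) + u + c [MOD k]
        calc ((((i:ℕ)+u) % k) + c) % k ≡ ((i:ℕ)+u) % k + c [MOD k] := Nat.mod_modEq _ _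
          _ ≡ (i:ℕ) + u + c [MOD k] := Nat.ModEq.add_right _ (Nat.mod_modEq _ _)
      have hrhs : ψ (e i) + u ≡ (i:ℕ) + u + c [MOD k] := by
        have h1 : ψ (e i) + u ≡ ((i:ℕ) % k + c) + u [MOD k] :=
          Nat.ModEq.add_right _ (Nat.mod_modEq _ _)
        have h2 : ((i:ℕ) % k + c) + u ≡ ((i:ℕ) + c) + u [MOD k] :=
          Nat.ModEq.add_right _ (Nat.ModEq.add_right _ (Nat.mod_modEq _ _))
        have h3 : ((i:ℕ) + c) + u = (i:ℕ) + u + c := by ring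
        rw [h3] at h2
        exact h1.trans h2
      exact (hlhs.trans hrhs.symm).eq_of_lt_of_lt (hψlt _) (by omega)
  obtain ⟨i0, hi0⟩ := Finset.card_pos.mp (by omega : 0 < I.card)
  set Sψ := S.image ψ with hSψ
  have hSψcard : Sψ.card = S.card := Finset.card_image_of_injective _ hψinj
  have hSψne : Sψ.Nonempty :=
    ⟨ψ (e i0), Finset.mem_image_of_mem _ (Finset.mem_image_of_mem _ hi0)⟩
  set M := Sψ.max' hSψne with hM
  have hMmem : M ∈ Sψ := Sψ.max'_mem hSψne
  obtain ⟨p, hp, hpM⟩ := Finset.mem_image.mp hMmem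
  obtain ⟨iM, hiM, hiMp⟩ := Finset.mem_image.mp hp
  have hsub2 : (Sψ.erase M) ∪ Finset.Ico M (M + l) ⊆ J.image ψ := by
    intro x hx
    rcases Finset.mem_union.mp hx with hx | hx
    · have hx' := Finset.mem_of_mem_erase hx
      obtain ⟨p', hp', hp'x⟩ := Finset.mem_image.mp hx'
      obtain ⟨i', hi', hi'p⟩ := Finset.mem_image.mp hp'
      obtain ⟨j, hjJ, hjψ⟩ := hcov i' hi' 0 (by omega)
      refine Finset.mem_image.mpr ⟨j, hjJ, ?_⟩
      rw [hjψ, hi'p, hp'x]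
      omega
    · obtain ⟨hx1, hx2⟩ := Finset.mem_Ico.mp hx
      obtain ⟨j, hjJ, hjψ⟩ := hcov iM hiM (x - M) (by omega)
      refine Finset.mem_image.mpr ⟨j, hjJ, ?_⟩
      rw [hjψ, hiMp, hpM]
      omega
  have hdisj : Disjoint (Sψ.erase M) (Finset.Ico M (M + l)) := by
    rw [Finset.disjoint_left]
    intro x hx hx2
    have h1 : x ≤ M := Sψ.le_max' x (Finset.mem_of_mem_erase hx)
    have h2 : x ≠ M := Finset.ne_of_mem_erase hx
    have h3 := (Finset.mem_Ico.mp hx2).1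
    omega
  have hcard2 := Finset.card_le_card hsub2
  rw [Finset.card_union_of_disjoint hdisj, Nat.card_Ico,
    Finset.card_erase_of_mem hMmem, Nat.add_sub_cancel_left] at hcard2
  have hJcard : (J.image ψ).card = J.card := Finset.card_image_of_injective _ hψinj
  rw [hJcard, hSψcard] at hcard2
  have hS1 : 1 ≤ S.card := Finset.card_pos.mpr ⟨e i0, Finset.mem_image_of_mem _ hi0⟩
  omega
end
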